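/- Let n be a positive integer with gcd(2^n - 1, 7) = 1, and let X be a 3-dimensional F_2-subspace of F_{2^13} (or more generally F_{2^n}), with α primitive. Then the cyclic shifts α^j·X for 0 ≤ j ≤ 2^n - 2 are pairwise distinct, giving 2^n - 1 distinct 3-dimensional subspaces. -/

import Mathlib

open Finset in
private lemma shift_pow_seven_eq_one {F : Type*} [Field F] [Fintype F] [Algebra (ZMod 2) F]
    (β : Fˣ) (X : Submodule (ZMod 2) F) (hX : Module.finrank (ZMod 2) X = 3)
    (h : (fun x : F => (β : F) * x) '' (X : Set F) = X) : (β : F) ^ 7 = 1 := by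
  classical
  set S : Finset F := (Finset.univ.filter (· ∈ X)).erase 0 with hS
  have hcardX : Fintype.card X = 8 := by
    have := Module.card_eq_pow_finrank (K := ZMod 2) (V := X)
    rw [hX] at this
    simpa using this
  have hcardS : S.card = 7 := by
    rw [hS, Finset.card_erase_of_mem (by simp [X.zero_mem])]
    have : (Finset.univ.filter (· ∈ X)).card = Fintype.card X := by
      rw [Fintype.card_subtype]
    rw [this, hcardX]
  have hmem : ∀ x ∈ S, (β : F) * x ∈ S := by
    intro x hx
    rw [hS, Finset.mem_erase, Finset.mem_filter] at hx ⊢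
    refine ⟨by simp [hx.1], by simp, ?_⟩
    have : (β : F) * x ∈ (X : Set F) := by
      rw [← h]; exact ⟨x, hx.2.2, rfl⟩
    exact this
  have hinj : Function.Injective (fun x : F => (β : F) * x) :=
    fun a b hab => by
      simpa using mul_left_cancel₀ (Units.ne_zero β) hab
  have himg : S.image (fun x : F => (β : F) * x) = S := by
    apply Finset.eq_of_subset_of_card_le
    · intro y hy
      rcases Finset.mem_image.mp hy with ⟨x, hx, rfl⟩
      exact hmem x hx
    · rw [Finset.card_image_of_injective _ hinj]
  have hprod : ∏ x ∈ S, ((β : F) * x) = ∏ x ∈ S, x := by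
    conv_rhs => rw [← himg]
    rw [Finset.prod_image (fun a _ b _ hab => hinj hab)]
  rw [Finset.prod_mul_distrib, Finset.prod_const, hcardS] at hprod
  have hne : ∏ x ∈ S, x ≠ 0 := by
    rw [Finset.prod_ne_zero_iff]
    intro x hx
    rw [hS, Finset.mem_erase] at hx
    exact hx.1
  exact mul_right_cancel₀ hne (by rw [hprod, one_mul])

/-- If `gcd(2^n - 1, 7) = 1` and `X` is a 3-dimensional `F_2`-subspace of `F_{2^n}`
with `α` primitive, then the cyclic shifts `α^j·X`, `0 ≤ j ≤ 2^n - 2`, are pairwise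
distinct, giving `2^n - 1` distinct 3-dimensional subspaces. -/
theorem cyclic_shifts_of_three_dim_subspace_distinct
    (n : ℕ) (hn : 0 < n) (h7 : Nat.gcd (2 ^ n - 1) 7 = 1)
    (F : Type*) [Field F] [Fintype F] (hcard : Fintype.card F = 2 ^ n)
    [Algebra (ZMod 2) F]
    (α : Fˣ) (hα : orderOf α = 2 ^ n - 1)
    (X : Submodule (ZMod 2) F) (hX : Module.finrank (ZMod 2) X = 3) :
    ∀ j₁ ≤ 2 ^ n - 2, ∀ j₂ ≤ 2 ^ n - 2,
      (fun x : F => (α : F) ^ j₁ * x) '' (X : Set F) =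
        (fun x : F => (α : F) ^ j₂ * x) '' (X : Set F) → j₁ = j₂ := by
  -- key step: from the hypothesis with j₁ ≤ j₂ derive equality
  have key : ∀ j₁ j₂, j₁ ≤ j₂ → j₂ ≤ 2 ^ n - 2 →
      (fun x : F => (α : F) ^ j₁ * x) '' (X : Set F) =
        (fun x : F => (α : F) ^ j₂ * x) '' (X : Set F) → j₁ = j₂ := by
    intro j₁ j₂ hle hj₂ heq
    set d := j₂ - j₁ with hd
    have hj₂eq : j₂ = j₁ + d := by omega
    -- show (α^d) • X = X
    have hshift : (fun x : F => ((α ^ d : Fˣ) : F) * x) '' (X : Set F) = X := by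
      ext y
      constructor
      · rintro ⟨x, hx, rfl⟩
        have : (α : F) ^ j₂ * x ∈ (fun x : F => (α : F) ^ j₁ * x) '' (X : Set F) := by
          rw [heq]; exact ⟨x, hx, rfl⟩
        rcases this with ⟨z, hz, hzeq⟩
        simp only at hzeq
        have : (α : F) ^ j₁ * z = (α : F) ^ j₁ * (((α ^ d : Fˣ) : F) * x) := by
          rw [hzeq, hj₂eq, pow_add, Units.val_pow_eq_pow_val, ← mul_assoc]
        have hz' : z = ((α ^ d : Fˣ) : F) * x :=
          mul_left_cancel₀ (pow_ne_zero _ (Units.ne_zero α)) this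
        show ((α ^ d : Fˣ) : F) * x ∈ (X : Set F)
        rw [← hz']; exact hz
      · intro hy
        have : (α : F) ^ j₁ * y ∈ (fun x : F => (α : F) ^ j₂ * x) '' (X : Set F) := by
          rw [← heq]; exact ⟨y, hy, rfl⟩
        rcases this with ⟨z, hz, hzeq⟩
        simp only at hzeq
        refine ⟨z, hz, ?_⟩
        show ((α ^ d : Fˣ) : F) * z = y
        have : (α : F) ^ j₁ * (((α ^ d : Fˣ) : F) * z) = (α : F) ^ j₁ * y := by
          rw [← hzeq, hj₂eq, pow_add, Units.val_pow_eq_pow_val, ← mul_assoc]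
        exact mul_left_cancel₀ (pow_ne_zero _ (Units.ne_zero α)) this
    have h7' : ((α ^ d : Fˣ) : F) ^ 7 = 1 := shift_pow_seven_eq_one (α ^ d) X hX hshift
    have hu7 : (α ^ d) ^ 7 = 1 := Units.ext (by rw [Units.val_pow_eq_pow_val, Units.val_one]; exact h7')
    have hdvd7 : orderOf (α ^ d) ∣ 7 := orderOf_dvd_of_pow_eq_one hu7
    have hdvdN : orderOf (α ^ d) ∣ 2 ^ n - 1 := by
      rw [← hα]; exact orderOf_pow_dvd d
    have hone : orderOf (α ^ d) = 1 :=
      Nat.eq_one_of_dvd_coprimes h7 hdvdN hdvd7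
    have hαd : α ^ d = 1 := orderOf_eq_one_iff.mp hone
    have : 2 ^ n - 1 ∣ d := hα ▸ orderOf_dvd_of_pow_eq_one hαd
    have h1 : 1 ≤ 2 ^ n := Nat.one_le_two_pow
    have h2 : 2 ≤ 2 ^ n := by
      calc 2 = 2 ^ 1 := rfl
      _ ≤ 2 ^ n := Nat.pow_le_pow_right (by norm_num) hn
    have hd0 : d = 0 := by
      rcases this with ⟨k, hk⟩
      rcases Nat.eq_zero_or_pos k with rfl | hkpos
      · omega
      · have : 2 ^ n - 1 ≤ d := by
          calc 2 ^ n - 1 = (2 ^ n - 1) * 1 := by ring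
          _ ≤ (2 ^ n - 1) * k := Nat.mul_le_mul_left _ hkpos
          _ = d := hk.symm
        omega
    omega
  intro j₁ hj₁ j₂ hj₂ heq
  rcases le_total j₁ j₂ with h | h
  · exact key j₁ j₂ h hj₂ heq
  · exact (key j₂ j₁ h hj₁ heq.symm).symm
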